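/- Let A be a finite type, M a commutative monoid, and φ a monoid homomorphism from the free monoid on A (lists over A under concatenation) to M. Then there exists m ∈ ℕ such that for all n ≥ m and all lists s, t over A of length n with φ(s) = φ(t), there is a finite chain s = w₀, w₁, …, w_k = t of lists of length n in which each consecutive pair has the form wᵢ = u ++ x ++ v and wᵢ₊₁ = u ++ y ++ v for some lists u, v and some lists x, y of length m with φ(x) = φ(y). -/

import Mathlib

open Relation

namespace FreeMonoidRewriteAux

variable {A : Type*} {M : Type*} [CommMonoid M] (φ : FreeMonoid A →* M)

/-- weight of a list -/
def ν (l : List A) : M := φ (FreeMonoid.ofList l)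

lemma ν_append (u v : List A) : ν φ (u ++ v) = ν φ u * ν φ v := by
  unfold ν; rw [FreeMonoid.ofList_append, map_mul]

lemma ν_eq_prod (l : List A) : ν φ l = (l.map fun a => φ (FreeMonoid.of a)).prod := by
  induction l with
  | nil => simpa [ν] using map_one φ
  | cons a l ih =>
      rw [show (a :: l) = [a] ++ l from rfl, ν_append, ih]
      simp [ν, FreeMonoid.ofList_cons]

lemma ν_perm {l l' : List A} (h : l.Perm l') : ν φ l = ν φ l' := by
  rw [ν_eq_prod, ν_eq_prod]; exact (h.map _).prod_eq

/-- weight of a multiset -/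
def w (c : Multiset A) : M := (c.map fun a => φ (FreeMonoid.of a)).prod

lemma w_add (c d : Multiset A) : w φ (c + d) = w φ c * w φ d := by
  simp [w]

lemma w_coe (l : List A) : w φ (↑l) = ν φ l := by
  simp [w, ν_eq_prod]

/-- the full invariant relation on multisets: equal cardinality and equal weight -/
def Rfull (c c' : Multiset A) : Prop :=
  Multiset.card c = Multiset.card c' ∧ w φ c = w φ c'

/-- one elementary replacement step using a generating set `G` of pairs -/
def Step (G : Set (Multiset A × Multiset A)) (a b : Multiset A) : Prop :=
  ∃ p ∈ G, ∃ d, (a = p.1 + d ∧ b = p.2 + d) ∨ (a = p.2 + d ∧ b = p.1 + d)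

lemma Step.symm {G : Set (Multiset A × Multiset A)} {a b : Multiset A}
    (h : Step G a b) : Step G b a := by
  obtain ⟨p, hp, d, h | h⟩ := h
  · exact ⟨p, hp, d, Or.inr ⟨h.2, h.1⟩⟩
  · exact ⟨p, hp, d, Or.inl ⟨h.2, h.1⟩⟩

lemma Step.add_right {G : Set (Multiset A × Multiset A)} {a b : Multiset A}
    (h : Step G a b) (e : Multiset A) : Step G (a + e) (b + e) := by
  obtain ⟨p, hp, d, h | h⟩ := h
  · exact ⟨p, hp, d + e, Or.inl ⟨by rw [h.1, add_assoc], by rw [h.2, add_assoc]⟩⟩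
  · exact ⟨p, hp, d + e, Or.inr ⟨by rw [h.1, add_assoc], by rw [h.2, add_assoc]⟩⟩

lemma Step.rfull {G : Set (Multiset A × Multiset A)}
    (hG : ∀ p ∈ G, Rfull φ p.1 p.2) {a b : Multiset A} (h : Step G a b) :
    Rfull φ a b := by
  obtain ⟨p, hp, d, h | h⟩ := h <;> obtain ⟨h1, h2⟩ := hG p hp <;>
    rw [h.1, h.2] <;> constructor <;> simp [w_add, h1, h2]

/-- connectivity by steps -/
def E (G : Set (Multiset A × Multiset A)) : Multiset A → Multiset A → Prop :=
  ReflTransGen (Step G)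

lemma E.add_right {G : Set (Multiset A × Multiset A)} {a b : Multiset A}
    (h : E G a b) (e : Multiset A) : E G (a + e) (b + e) :=
  ReflTransGen.lift (· + e) (fun a b (hs : Step G a b) => hs.add_right e) _ _ h

/-- E is an additive congruence -/
noncomputable def con (G : Set (Multiset A × Multiset A)) : AddCon (Multiset A) where
  r := E G
  iseqv := ⟨fun _ => ReflTransGen.refl,
    fun h => by
      induction h with
      | refl => exact ReflTransGen.refl
      | tail _ hs ih => exact (ReflTransGen.single hs.symm).trans ih,
    fun h h' => h.trans h'⟩
  add' := by
    intro a b c d h h'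
    refine (h.add_right c).trans ?_
    have : E G (c + b) (d + b) := h'.add_right b
    rwa [add_comm c b, add_comm d b] at this

/-- The key finite-generation lemma (Rédei-style, via Noetherianity). -/
lemma exists_gen [Fintype A] :
    ∃ G : Set (Multiset A × Multiset A), G.Finite ∧ (∀ p ∈ G, Rfull φ p.1 p.2) ∧
      ∀ c c', Rfull φ c c' → E G c c' := by
  classical
  -- the set of binomials coming from all invariant pairs
  set R : Type _ := AddMonoidAlgebra ℚ (A →₀ ℕ) with hR
  haveI : IsNoetherianRing R := inferInstanceAs (IsNoetherianRing (MvPolynomial A ℚ))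
  set T : Set R := {p | ∃ c c' : A →₀ ℕ,
    Rfull φ (Finsupp.toMultiset c) (Finsupp.toMultiset c') ∧
    p = AddMonoidAlgebra.single c 1 - AddMonoidAlgebra.single c' 1} with hT
  -- the ideal it spans is spanned by a finite subset T' of T
  have hIfg : (Ideal.span T).FG := IsNoetherian.noetherian _
  obtain ⟨S, hS⟩ := hIfg
  have hsub : ∀ g ∈ S, ∃ F : Finset R, ↑F ⊆ T ∧ (g : R) ∈ Ideal.span (F : Set R) := by
    intro g hg
    have : (g : R) ∈ Ideal.span T := by
      rw [← hS]; exact Ideal.subset_span hg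
    exact Submodule.mem_span_finite_of_mem_span this
  choose F hFsub hFmem using hsub
  set T' : Finset R := S.attach.biUnion (fun g => F g.1 g.2) with hT'
  have hT'T : (T' : Set R) ⊆ T := by
    intro x hx
    simp only [hT', Finset.coe_biUnion, Set.mem_iUnion, Finset.mem_coe] at hx
    obtain ⟨g, hg, hx⟩ := hx
    exact hFsub _ _ hx
  have hspan : Ideal.span T ≤ Ideal.span (T' : Set R) := by
    rw [← hS, Ideal.span_le]
    intro g hg
    refine Ideal.span_mono ?_ (hFmem g hg)
    intro x hx
    simp only [hT', Finset.coe_biUnion, Set.mem_iUnion, Finset.mem_coe]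
    exact ⟨⟨g, hg⟩, S.mem_attach _, hx⟩
  -- choose invariant pairs for the elements of T'
  have hchoice : ∀ x ∈ T', ∃ q : Multiset A × Multiset A, Rfull φ q.1 q.2 ∧
      x = AddMonoidAlgebra.single (Multiset.toFinsupp q.1) 1 - AddMonoidAlgebra.single (Multiset.toFinsupp q.2) 1 := by
    intro x hx
    obtain ⟨c, c', hcc, hxeq⟩ := hT'T hx
    refine ⟨(Finsupp.toMultiset c, Finsupp.toMultiset c'), hcc, ?_⟩
    simp only [Finsupp.toMultiset_toFinsupp, hxeq]
  choose q hq1 hq2 using hchoice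
  set G : Set (Multiset A × Multiset A) := {p | ∃ x, ∃ hx : x ∈ T', p = q x hx} with hG
  have hGfin : G.Finite := by
    have : G ⊆ ⋃ x ∈ T', {p | ∃ hx : x ∈ T', p = q x hx} := by
      intro p hp; obtain ⟨x, hx, hpe⟩ := hp
      exact Set.mem_biUnion hx ⟨hx, hpe⟩
    refine Set.Finite.subset ?_ this
    refine Set.Finite.biUnion T'.finite_toSet (fun x hx => ?_)
    refine Set.Finite.subset (Set.finite_singleton (q x hx)) ?_
    rintro p ⟨_, rfl⟩; rfl
  have hGinv : ∀ p ∈ G, Rfull φ p.1 p.2 := by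
    rintro p ⟨x, hx, rfl⟩; exact hq1 x hx
  refine ⟨G, hGfin, hGinv, ?_⟩
  -- the quotient commutative monoid and the induced ring map
  set Q := (con (A := A) G).Quotient with hQ
  set μ : (A →₀ ℕ) →+ Q := (con (A := A) G).mk'.comp Finsupp.toMultiset with hμ
  set Θ : R →+* AddMonoidAlgebra ℚ Q := AddMonoidAlgebra.mapDomainRingHom ℚ μ with hΘ
  have hΘsingle : ∀ c : A →₀ ℕ, Θ (AddMonoidAlgebra.single c 1) = AddMonoidAlgebra.single (μ c) 1 := by
    intro c
    simp [hΘ, AddMonoidAlgebra.mapDomainRingHom, AddMonoidAlgebra.mapDomain_single]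
  have hker : ∀ x ∈ T', Θ x = 0 := by
    intro x hx
    rw [hq2 x hx, map_sub, hΘsingle, hΘsingle]
    have hrel : E (A := A) G (q x hx).1 (q x hx).2 := by
      refine ReflTransGen.single ?_
      exact ⟨q x hx, ⟨x, hx, rfl⟩, 0, Or.inl ⟨(add_zero _).symm, (add_zero _).symm⟩⟩
    have : (((q x hx).1 : Multiset A) : Q) = (((q x hx).2 : Multiset A) : Q) :=
      (AddCon.eq _).2 hrel
    have hμeq : μ (Multiset.toFinsupp (q x hx).1) = μ (Multiset.toFinsupp (q x hx).2) := by
      simp only [hμ, AddMonoidHom.comp_apply, Multiset.toFinsupp_toMultiset]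
      exact this
    rw [hμeq, sub_self]
  have hkerideal : Ideal.span (T' : Set R) ≤ RingHom.ker Θ := by
    rw [Ideal.span_le]
    intro x hx
    exact hker x hx
  -- conclusion
  intro c c' hcc
  have hmem : (AddMonoidAlgebra.single (Multiset.toFinsupp c) 1 - AddMonoidAlgebra.single (Multiset.toFinsupp c') 1 : R) ∈
      Ideal.span T := by
    apply Ideal.subset_span
    exact ⟨Multiset.toFinsupp c, Multiset.toFinsupp c', by
      simpa only [Multiset.toFinsupp_toMultiset] using hcc, rfl⟩
  have hker0 : Θ (AddMonoidAlgebra.single (Multiset.toFinsupp c) 1 - AddMonoidAlgebra.single (Multiset.toFinsupp c') 1) = 0 :=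
    hkerideal (hspan hmem)
  rw [map_sub, hΘsingle, hΘsingle, sub_eq_zero] at hker0
  have hμeq : μ (Multiset.toFinsupp c) = μ (Multiset.toFinsupp c') := by
    rcases AddMonoidAlgebra.single_inj.1 hker0 with h | h
    · exact h.1
    · exact absurd h.1 one_ne_zero
  have : ((c : Multiset A) : Q) = ((c' : Multiset A) : Q) := by
    have h := hμeq
    simp only [hμ, AddMonoidHom.comp_apply, Multiset.toFinsupp_toMultiset] at h
    exact h
  exact (AddCon.eq _).1 this

/-! ### List-level rewriting -/

/-- The rewriting relation of the theorem. -/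
def Rel (m : ℕ) (p q : List A) : Prop :=
  ∃ u v x y : List A, x.length = m ∧ y.length = m ∧
    φ (FreeMonoid.ofList x) = φ (FreeMonoid.ofList y) ∧
    p = u ++ x ++ v ∧ q = u ++ y ++ v

/-- master rewriting lemma: any equal-length, equal-weight factor replacement of length
`≤ m` inside a list of length `≥ m` is a single `Rel m` step. -/
lemma master {m : ℕ} (u x y v : List A) (hx : x.length ≤ m) (hxy : x.length = y.length)
    (hφ : ν φ x = ν φ y) (htot : m ≤ u.length + x.length + v.length) :
    Rel φ m (u ++ x ++ v) (u ++ y ++ v) := by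
  set j : ℕ := min v.length (m - x.length) with hj
  set k : ℕ := m - x.length - j with hk
  have hkle : k ≤ u.length := by omega
  set U : List A := u.take (u.length - k) with hU
  set Qq : List A := u.drop (u.length - k) with hQ
  set P : List A := v.take j with hP
  set V : List A := v.drop j with hV
  have hu : u = U ++ Qq := (List.take_append_drop _ u).symm
  have hv : v = P ++ V := (List.take_append_drop _ v).symm
  have hQlen : Qq.length = k := by
    simp only [hQ, List.length_drop]; omega
  have hPlen : P.length = j := by
    simp only [hP, List.length_take]; omega
  have hXlen : (Qq ++ x ++ P).length = m := by
    simp only [List.length_append, hQlen, hPlen]; omega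
  have hYlen : (Qq ++ y ++ P).length = m := by
    simp only [List.length_append, hQlen, hPlen]; omega
  refine ⟨U, V, Qq ++ x ++ P, Qq ++ y ++ P, hXlen, hYlen, ?_, ?_, ?_⟩
  · show ν φ (Qq ++ x ++ P) = ν φ (Qq ++ y ++ P)
    rw [ν_append, ν_append, ν_append, ν_append, hφ]
  · rw [hu, hv]; simp [List.append_assoc]
  · rw [hu, hv]; simp [List.append_assoc]

/-- permutations are realizable by `Rel m` chains. -/
lemma perm_chain {m : ℕ} (hm : 2 ≤ m) {s t : List A} (h : s.Perm t) :
    ∀ u : List A, m ≤ u.length + s.length →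
      ReflTransGen (Rel φ m) (u ++ s) (u ++ t) := by
  induction h with
  | nil => intro u _; exact ReflTransGen.refl
  | cons a h ih =>
      rename_i l₁ l₂
      intro u hlen
      have e1 : u ++ a :: l₁ = (u ++ [a]) ++ l₁ := by simp
      have e2 : u ++ a :: l₂ = (u ++ [a]) ++ l₂ := by simp
      rw [e1, e2]
      apply ih
      simp only [List.length_append, List.length_singleton]
      simp only [List.length_cons] at hlen
      omega
  | swap a b l =>
      intro u hlen
      refine ReflTransGen.single ?_
      have := master φ u [b, a] [a, b] l (by simpa using hm) rfl
        (ν_perm φ (List.Perm.swap a b []))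
        (by simp only [List.length_cons, List.length_nil] at hlen ⊢; omega)
      simpa using this
  | trans h₁ h₂ ih₁ ih₂ =>
      intro u hlen
      refine (ih₁ u hlen).trans (ih₂ u ?_)
      rwa [h₁.length_eq] at hlen

lemma perm_chain' {m : ℕ} (hm : 2 ≤ m) {s t : List A} (h : s.Perm t)
    (hlen : m ≤ s.length) : ReflTransGen (Rel φ m) s t := by
  have := perm_chain φ hm h [] (by simpa using hlen)
  simpa using this

/-- a single multiset step can be realized as a list-level chain. -/
lemma step_chain {m : ℕ} (hm : 2 ≤ m) {G : Set (Multiset A × Multiset A)}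
    (hG : ∀ p ∈ G, Rfull φ p.1 p.2) (hB : ∀ p ∈ G, Multiset.card p.1 ≤ m)
    {c c' : Multiset A} (h : Step G c c') {s t : List A}
    (hs : (s : Multiset A) = c) (ht : (t : Multiset A) = c') (hlen : m ≤ s.length) :
    ReflTransGen (Rel φ m) s t := by
  -- extract the pair, in a symmetric form
  obtain ⟨x, y, d, hxy, hcard, hxm, hc, hc'⟩ :
      ∃ x y d : Multiset A, w φ x = w φ y ∧ Multiset.card x = Multiset.card y ∧
        Multiset.card x ≤ m ∧ c = x + d ∧ c' = y + d := by
    obtain ⟨p, hp, d, hor | hor⟩ := h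
    · exact ⟨p.1, p.2, d, (hG p hp).2, (hG p hp).1, hB p hp, hor.1, hor.2⟩
    · exact ⟨p.2, p.1, d, ((hG p hp).2).symm, ((hG p hp).1).symm,
        by rw [← (hG p hp).1]; exact hB p hp, hor.1, hor.2⟩
  set x' : List A := x.toList with hx'
  set y' : List A := y.toList with hy'
  set d' : List A := d.toList with hd'
  have hxl : (x' : Multiset A) = x := Multiset.coe_toList x
  have hyl : (y' : Multiset A) = y := Multiset.coe_toList y
  have hdl : (d' : Multiset A) = d := Multiset.coe_toList d
  have hperm1 : s.Perm (x' ++ d') := by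
    rw [← Multiset.coe_eq_coe]
    rw [hs, hc]
    simp [← hxl, ← hdl]
  have hperm2 : (y' ++ d').Perm t := by
    rw [← Multiset.coe_eq_coe]
    rw [ht, hc']
    simp [← hyl, ← hdl]
  have hx'len : x'.length = Multiset.card x := by
    rw [← Multiset.coe_card, hxl]
  have hy'len : y'.length = Multiset.card y := by
    rw [← Multiset.coe_card, hyl]
  have hd'len : d'.length = Multiset.card d := by
    rw [← Multiset.coe_card, hdl]
  have hslen : s.length = Multiset.card x + Multiset.card d := by
    rw [← Multiset.coe_card, hs, hc, Multiset.card_add]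
  have hstep : Rel φ m (x' ++ d') (y' ++ d') := by
    have := master (m := m) φ [] x' y' d' (by omega) (by omega)
      (by rw [← w_coe, ← w_coe, hxl, hyl]; exact hxy) (by simp only [List.length_nil, Nat.zero_add]; omega)
    simpa using this
  refine (perm_chain' φ hm hperm1 hlen).trans
    (ReflTransGen.trans (ReflTransGen.single hstep) (perm_chain' φ hm hperm2 ?_))
  simp only [List.length_append]
  omega

lemma E_card {G : Set (Multiset A × Multiset A)}
    (hG : ∀ p ∈ G, Rfull φ p.1 p.2) {c c' : Multiset A} (h : E G c c') :
    Multiset.card c = Multiset.card c' := by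
  induction h with
  | refl => rfl
  | tail _ hstep ih => rw [ih, (Step.rfull φ hG hstep).1]

lemma E_chain {m : ℕ} (hm : 2 ≤ m) {G : Set (Multiset A × Multiset A)}
    (hG : ∀ p ∈ G, Rfull φ p.1 p.2) (hB : ∀ p ∈ G, Multiset.card p.1 ≤ m)
    {c c' : Multiset A} (h : E G c c') :
    ∀ s t : List A, (s : Multiset A) = c → (t : Multiset A) = c' → m ≤ s.length →
      ReflTransGen (Rel φ m) s t := by
  induction h with
  | refl =>
      intro s t hs ht hlen
      exact perm_chain' φ hm (Multiset.coe_eq_coe.1 (hs.trans ht.symm)) hlen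
  | tail hE hstep ih =>
      rename_i b c''
      intro s t hs ht hlen
      have hb : ((b.toList : List A) : Multiset A) = b := Multiset.coe_toList b
      refine (ih s b.toList hs hb hlen).trans ?_
      refine step_chain φ hm hG hB hstep hb ht ?_
      have h1 : b.toList.length = Multiset.card b := by
        rw [← Multiset.coe_card, hb]
      have h2 : Multiset.card b = Multiset.card c := (E_card φ hG hE).symm
      have h3 : Multiset.card c = s.length := by rw [← hs, Multiset.coe_card]
      omega

end FreeMonoidRewriteAux

open FreeMonoidRewriteAux

/-- **Rewriting within weight classes of a commutative-monoid weight.**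
Let `A` be a finite type, `M` a commutative monoid and `φ : FreeMonoid A →* M` a monoid
homomorphism.  Then there exists `m : ℕ` such that for all `n ≥ m`, any two lists `s, t`
over `A` of length `n` with `φ s = φ t` are connected by a finite chain of rewriting
steps, where each step replaces a factor `x` of length `m` by a factor `y` of length `m`
with `φ x = φ y`. -/
theorem freeMonoid_weightClass_rewriting {A : Type*} [Fintype A]
    {M : Type*} [CommMonoid M] (φ : FreeMonoid A →* M) :
    ∃ m : ℕ, ∀ n : ℕ, m ≤ n → ∀ s t : List A, s.length = n → t.length = n →
      φ (FreeMonoid.ofList s) = φ (FreeMonoid.ofList t) →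
      Relation.ReflTransGen
        (fun p q : List A => ∃ u v x y : List A,
          x.length = m ∧ y.length = m ∧
          φ (FreeMonoid.ofList x) = φ (FreeMonoid.ofList y) ∧
          p = u ++ x ++ v ∧ q = u ++ y ++ v)
        s t := by
  classical
  obtain ⟨G, hGfin, hGinv, hGgen⟩ := exists_gen φ
  -- a bound on the sizes of the generators
  obtain ⟨B, hB⟩ : ∃ B : ℕ, ∀ p ∈ G, Multiset.card p.1 ≤ B := by
    rcases (hGfin.image (fun p => Multiset.card p.1)).bddAbove with ⟨B, hBmem⟩
    exact ⟨B, fun p hp => hBmem (Set.mem_image_of_mem _ hp)⟩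
  refine ⟨max 2 B, ?_⟩
  intro n hn s t hslen htlen hφeq
  have hm2 : 2 ≤ max 2 B := le_max_left _ _
  have hRfull : Rfull φ (↑s) (↑t) := by
    constructor
    · rw [Multiset.coe_card, Multiset.coe_card, hslen, htlen]
    · rw [w_coe, w_coe]; exact hφeq
  have hE : E G (↑s) (↑t) := hGgen _ _ hRfull
  have := E_chain φ hm2 hGinv (fun p hp => le_trans (hB p hp) (le_max_right _ _)) hE
    s t rfl rfl (by rw [hslen]; exact hn)
  exact this
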